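/- There is an absolute constant c > 0 with the following property: for any t ∈ [0,1] and any positive integer n there exists a univariate real polynomial Q of degree at most n/2 such that Q(1−t) = 1 and |Q(s)| ≤ c ρ_n*(t) / (ρ_n*(t) + |1 − t − s|) for all s ∈ [−1,1]. -/

import Mathlib

open Set

/-- `ρ_n^*(t) = n⁻² + n⁻¹ √t`. -/
noncomputable def rhoStar (n : ℕ) (t : ℝ) : ℝ := ((n : ℝ))⁻¹ ^ 2 + (n : ℝ)⁻¹ * Real.sqrt t

section FDPSection

open Polynomial Finset

namespace FDP

lemma natDegree_T_le : ∀ j : ℕ, (Polynomial.Chebyshev.T ℝ (j : ℤ)).natDegree ≤ j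
  | 0 => by simp [Polynomial.Chebyshev.T_zero]
  | 1 => by simp [Polynomial.Chebyshev.T_one]
  | (j+2) => by
    have h1 := natDegree_T_le j
    have h2 := natDegree_T_le (j+1)
    rw [show ((j+2 : ℕ) : ℤ) = ((j:ℤ)) + 2 by push_cast; ring, Polynomial.Chebyshev.T_add_two]
    refine (natDegree_sub_le _ _).trans ?_
    rw [max_le_iff]
    constructor
    · refine natDegree_mul_le.trans ?_
      have hX : (2 * X : ℝ[X]).natDegree ≤ 1 := by
        refine natDegree_mul_le.trans ?_
        simp
      have : ((j:ℤ) + 1) = ((j+1 : ℕ) : ℤ) := by push_cast; ring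
      rw [this]
      omega
    · omega

lemma natDegree_U_le : ∀ j : ℕ, (Polynomial.Chebyshev.U ℝ (j : ℤ)).natDegree ≤ j
  | 0 => by simp [Polynomial.Chebyshev.U_zero]
  | 1 => by
    rw [show ((1:ℕ):ℤ) = 1 by norm_num, Polynomial.Chebyshev.U_one]
    refine natDegree_mul_le.trans ?_
    simp
  | (j+2) => by
    have h1 := natDegree_U_le j
    have h2 := natDegree_U_le (j+1)
    rw [show ((j+2 : ℕ) : ℤ) = ((j:ℤ)) + 2 by push_cast; ring, Polynomial.Chebyshev.U_add_two]
    refine (natDegree_sub_le _ _).trans ?_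
    rw [max_le_iff]
    constructor
    · refine natDegree_mul_le.trans ?_
      have hX : (2 * X : ℝ[X]).natDegree ≤ 1 := by
        refine natDegree_mul_le.trans ?_
        simp
      have : ((j:ℤ) + 1) = ((j+1 : ℕ) : ℤ) := by push_cast; ring
      rw [this]
      omega
    · omega

lemma sin_half_lb {u : ℝ} (h0 : 0 ≤ u) (h : u ≤ 3 * Real.pi / 2) :
    u / 7 ≤ Real.sin (u / 2) := by
  have hπ1 : (3.14 : ℝ) ≤ Real.pi := Real.pi_gt_d2.le
  have hπ2 : Real.pi ≤ 3.15 := Real.pi_lt_d2.le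
  rcases le_or_gt u Real.pi with h1 | h1
  · have hs := Real.mul_le_sin (x := u/2) (by linarith) (by linarith)
    have : 2 / Real.pi * (u / 2) = u / Real.pi := by ring
    rw [this] at hs
    have : u / 7 ≤ u / Real.pi := by
      apply div_le_div_of_nonneg_left h0 (by linarith) (by linarith)
    linarith
  · have hrw : Real.sin (u/2) = Real.cos (u/2 - Real.pi/2) := by
      rw [show u/2 - Real.pi/2 = -(Real.pi/2 - u/2) by ring, Real.cos_neg,
        Real.cos_pi_div_two_sub]
    rw [hrw]
    have hb := Real.one_sub_sq_div_two_le_cos (x := u/2 - Real.pi/2)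
    have hx0 : (0:ℝ) ≤ u/2 - Real.pi/2 := by linarith
    have hx1 : u/2 - Real.pi/2 ≤ Real.pi/4 := by linarith
    nlinarith [sq_nonneg (u/2 - Real.pi/2)]

noncomputable def Gker (M : ℕ) (u : ℝ) : ℝ :=
  ‖∑ k ∈ Finset.range M, Complex.exp ((k : ℂ) * (u : ℂ) * Complex.I)‖ ^ 2

lemma Gker_nonneg (M : ℕ) (u : ℝ) : 0 ≤ Gker M u := sq_nonneg _

lemma Gker_le_sq (M : ℕ) (u : ℝ) : Gker M u ≤ (M : ℝ) ^ 2 := by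
  have habs : ‖∑ k ∈ Finset.range M, Complex.exp ((k : ℂ) * (u : ℂ) * Complex.I)‖
      ≤ (M : ℝ) := by
    refine (norm_sum_le _ _).trans ?_
    have : ∀ k ∈ Finset.range M,
        ‖Complex.exp ((k : ℂ) * (u : ℂ) * Complex.I)‖ = 1 := by
      intro k _
      rw [show ((k : ℂ) * (u : ℂ) * Complex.I) = (((k * u : ℝ)) : ℂ) * Complex.I by
        push_cast; ring]
      exact Complex.norm_exp_ofReal_mul_I _
    rw [Finset.sum_congr rfl this]
    simp
  unfold Gker
  exact pow_le_pow_left₀ (norm_nonneg _) habs 2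

lemma Gker_zero (M : ℕ) : Gker M 0 = (M : ℝ) ^ 2 := by
  simp [Gker]

lemma Gker_neg (M : ℕ) (u : ℝ) : Gker M (-u) = Gker M u := by
  unfold Gker
  congr 1
  have : (∑ k ∈ Finset.range M, Complex.exp ((k : ℂ) * ((-u : ℝ) : ℂ) * Complex.I))
      = (starRingEnd ℂ) (∑ k ∈ Finset.range M, Complex.exp ((k : ℂ) * (u : ℂ) * Complex.I)) := by
    rw [map_sum]
    refine Finset.sum_congr rfl fun k _ => ?_
    rw [← Complex.exp_conj]
    congr 1
    simp [Complex.ext_iff]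
  rw [this, Complex.norm_conj]

lemma Gker_eq (M : ℕ) (u : ℝ) :
    Gker M u = (∑ k ∈ Finset.range M, Real.cos (k * u)) ^ 2
      + (∑ k ∈ Finset.range M, Real.sin (k * u)) ^ 2 := by
  unfold Gker
  rw [Complex.sq_norm, Complex.normSq_apply, Complex.re_sum, Complex.im_sum]
  have hre : ∀ k ∈ Finset.range M,
      (Complex.exp ((k : ℂ) * (u : ℂ) * Complex.I)).re = Real.cos (k * u) := by
    intro k _
    rw [show ((k : ℂ) * (u : ℂ) * Complex.I) = (((k * u : ℝ)) : ℂ) * Complex.I by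
      push_cast; ring]
    exact Complex.exp_ofReal_mul_I_re _
  have him : ∀ k ∈ Finset.range M,
      (Complex.exp ((k : ℂ) * (u : ℂ) * Complex.I)).im = Real.sin (k * u) := by
    intro k _
    rw [show ((k : ℂ) * (u : ℂ) * Complex.I) = (((k * u : ℝ)) : ℂ) * Complex.I by
      push_cast; ring]
    exact Complex.exp_ofReal_mul_I_im _
  rw [Finset.sum_congr rfl hre, Finset.sum_congr rfl him]
  ring

lemma Gker_le_inv (M : ℕ) {u : ℝ} (h0 : 0 < u) (h : u ≤ 3 * Real.pi / 2) :
    Gker M u ≤ 49 / u ^ 2 := by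
  have hs : u / 7 ≤ Real.sin (u / 2) := sin_half_lb h0.le h
  have hcos : Real.cos u = 1 - 2 * Real.sin (u / 2) ^ 2 := by
    have h2 := Real.cos_two_mul (u / 2)
    have h3 := Real.sin_sq_add_cos_sq (u / 2)
    rw [show 2 * (u/2) = u by ring] at h2
    nlinarith
  have hden : 4 * u ^ 2 / 49 ≤ 2 - 2 * Real.cos u := by nlinarith
  set z : ℂ := Complex.exp ((u : ℂ) * Complex.I) with hz_def
  have hzk : ∀ k : ℕ, Complex.exp ((k : ℂ) * (u : ℂ) * Complex.I) = z ^ k := by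
    intro k
    rw [hz_def, ← Complex.exp_nat_mul]
    ring_nf
  have hnsq : ∀ j : ℕ, Complex.normSq (z ^ j - 1) = 2 - 2 * Real.cos (j * u) := by
    intro j
    have : z ^ j = Complex.exp (((j * u : ℝ) : ℂ) * Complex.I) := by
      rw [hz_def, ← Complex.exp_nat_mul]
      push_cast; ring_nf
    rw [this, Complex.normSq_apply]
    simp only [Complex.sub_re, Complex.sub_im, Complex.one_re, Complex.one_im,
      Complex.exp_ofReal_mul_I_re, Complex.exp_ofReal_mul_I_im]
    nlinarith [Real.sin_sq_add_cos_sq ((j : ℝ) * u)]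
  have hz1 : z ≠ 1 := by
    intro hz1
    have h1 := hnsq 1
    rw [pow_one, hz1, sub_self, map_zero] at h1
    simp only [Nat.cast_one, one_mul] at h1
    nlinarith
  have hgeom : (∑ k ∈ Finset.range M, z ^ k) = (z ^ M - 1) / (z - 1) := geom_sum_eq hz1 M
  unfold Gker
  simp_rw [hzk]
  rw [hgeom, norm_div, div_pow, Complex.sq_norm, Complex.sq_norm]
  have hnum : Complex.normSq (z ^ M - 1) ≤ 4 := by
    rw [hnsq M]
    nlinarith [Real.neg_one_le_cos ((M : ℝ) * u)]
  have hden' : 4 * u ^ 2 / 49 ≤ Complex.normSq (z - 1) := by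
    have := hnsq 1
    rw [pow_one] at this
    rw [this]
    push_cast
    rw [one_mul]
    exact hden
  have hdenpos : 0 < Complex.normSq (z - 1) := by nlinarith
  calc Complex.normSq (z ^ M - 1) / Complex.normSq (z - 1)
      ≤ 4 / (4 * u ^ 2 / 49) := by
        exact div_le_div₀ (by norm_num) hnum (by positivity) hden'
    _ ≤ 49 / u ^ 2 := by
        rw [div_le_div_iff₀ (by positivity) (by positivity)]
        nlinarith



noncomputable def Pker (M : ℕ) (θ0 : ℝ) : Polynomial ℝ :=
  2 * ((∑ k ∈ Finset.range M, C (Real.cos (k * θ0)) * Polynomial.Chebyshev.T ℝ (k : ℤ)) ^ 2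
     + (∑ k ∈ Finset.range M, C (Real.sin (k * θ0)) * Polynomial.Chebyshev.T ℝ (k : ℤ)) ^ 2
     + (1 - X ^ 2) *
       ((∑ k ∈ Finset.range M, C (Real.cos (k * θ0)) * Polynomial.Chebyshev.U ℝ ((k : ℤ) - 1)) ^ 2
      + (∑ k ∈ Finset.range M, C (Real.sin (k * θ0)) * Polynomial.Chebyshev.U ℝ ((k : ℤ) - 1)) ^ 2))

lemma Pker_eval (M : ℕ) (θ0 θ : ℝ) :
    (Pker M θ0).eval (Real.cos θ) = Gker M (θ - θ0) + Gker M (θ + θ0) := by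
  have evalT : ∀ f : ℕ → ℝ,
      (∑ k ∈ Finset.range M, C (f k) * Polynomial.Chebyshev.T ℝ (k : ℤ)).eval (Real.cos θ)
        = ∑ k ∈ Finset.range M, f k * Real.cos (k * θ) := by
    intro f
    rw [Polynomial.eval_finset_sum]
    refine Finset.sum_congr rfl fun k _ => ?_
    rw [Polynomial.eval_mul, Polynomial.eval_C, Polynomial.Chebyshev.T_real_cos]
    push_cast
    ring
  have evalU : ∀ f : ℕ → ℝ,
      (∑ k ∈ Finset.range M, C (f k) * Polynomial.Chebyshev.U ℝ ((k : ℤ) - 1)).eval (Real.cos θ)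
        * Real.sin θ = ∑ k ∈ Finset.range M, f k * Real.sin (k * θ) := by
    intro f
    rw [Polynomial.eval_finset_sum, Finset.sum_mul]
    refine Finset.sum_congr rfl fun k _ => ?_
    rw [Polynomial.eval_mul, Polynomial.eval_C, mul_assoc, Polynomial.Chebyshev.U_real_cos]
    congr 2
    push_cast
    ring
  set a := ∑ k ∈ Finset.range M, Real.cos (k * θ0) * Real.cos (k * θ) with ha
  set b := ∑ k ∈ Finset.range M, Real.sin (k * θ0) * Real.sin (k * θ) with hb
  set c' := ∑ k ∈ Finset.range M, Real.cos (k * θ0) * Real.sin (k * θ) with hc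
  set d' := ∑ k ∈ Finset.range M, Real.sin (k * θ0) * Real.cos (k * θ) with hd
  have h1 : ∑ k ∈ Finset.range M, Real.cos (k * (θ - θ0)) = a + b := by
    rw [ha, hb, ← Finset.sum_add_distrib]
    refine Finset.sum_congr rfl fun k _ => ?_
    rw [show (k : ℝ) * (θ - θ0) = k * θ - k * θ0 by ring, Real.cos_sub]
    ring
  have h2 : ∑ k ∈ Finset.range M, Real.sin (k * (θ - θ0)) = c' - d' := by
    rw [hc, hd, ← Finset.sum_sub_distrib]
    refine Finset.sum_congr rfl fun k _ => ?_
    rw [show (k : ℝ) * (θ - θ0) = k * θ - k * θ0 by ring, Real.sin_sub]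
    ring
  have h3 : ∑ k ∈ Finset.range M, Real.cos (k * (θ + θ0)) = a - b := by
    rw [ha, hb, ← Finset.sum_sub_distrib]
    refine Finset.sum_congr rfl fun k _ => ?_
    rw [show (k : ℝ) * (θ + θ0) = k * θ + k * θ0 by ring, Real.cos_add]
    ring
  have h4 : ∑ k ∈ Finset.range M, Real.sin (k * (θ + θ0)) = c' + d' := by
    rw [hc, hd, ← Finset.sum_add_distrib]
    refine Finset.sum_congr rfl fun k _ => ?_
    rw [show (k : ℝ) * (θ + θ0) = k * θ + k * θ0 by ring, Real.sin_add]
    ring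
  have hsin : Real.sin θ ^ 2 = 1 - Real.cos θ ^ 2 := Real.sin_sq θ
  have eA := evalT (fun k => Real.cos (k * θ0))
  have eD := evalT (fun k => Real.sin (k * θ0))
  have eC := evalU (fun k => Real.cos (k * θ0))
  have eB := evalU (fun k => Real.sin (k * θ0))
  rw [Gker_eq, Gker_eq, h1, h2, h3, h4]
  unfold Pker
  rw [Polynomial.eval_mul]
  simp only [Polynomial.eval_add, Polynomial.eval_mul, Polynomial.eval_pow, Polynomial.eval_sub,
    Polynomial.eval_one, Polynomial.eval_X, Polynomial.eval_ofNat]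
  rw [eA, eD]
  rw [← ha, ← hd]
  have eC2 : (∑ k ∈ Finset.range M, C (Real.cos (k * θ0)) * Polynomial.Chebyshev.U ℝ ((k : ℤ) - 1)).eval
      (Real.cos θ) * Real.sin θ = c' := by rw [hc]; exact eC
  have eB2 : (∑ k ∈ Finset.range M, C (Real.sin (k * θ0)) * Polynomial.Chebyshev.U ℝ ((k : ℤ) - 1)).eval
      (Real.cos θ) * Real.sin θ = b := by rw [hb]; exact eB
  have key : (1 - Real.cos θ ^ 2) *
      (((∑ k ∈ Finset.range M, C (Real.cos (k * θ0)) * Polynomial.Chebyshev.U ℝ ((k : ℤ) - 1)).eval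
          (Real.cos θ)) ^ 2
       + ((∑ k ∈ Finset.range M, C (Real.sin (k * θ0)) * Polynomial.Chebyshev.U ℝ ((k : ℤ) - 1)).eval
          (Real.cos θ)) ^ 2) = c' ^ 2 + b ^ 2 := by
    rw [← hsin, ← eC2, ← eB2]
    ring
  rw [key]
  ring

lemma Pker_natDegree (M : ℕ) (θ0 : ℝ) :
    (Pker M θ0).natDegree ≤ 2 * (M - 1) := by
  have hTsum : ∀ f : ℕ → ℝ,
      (∑ k ∈ Finset.range M, C (f k) * Polynomial.Chebyshev.T ℝ (k : ℤ)).natDegree ≤ M - 1 := by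
    intro f
    refine natDegree_sum_le_of_forall_le _ _ fun k hk => ?_
    refine (natDegree_C_mul_le _ _).trans ?_
    refine (natDegree_T_le k).trans ?_
    have := Finset.mem_range.mp hk
    omega
  have hUsum : ∀ f : ℕ → ℝ,
      (∑ k ∈ Finset.range M, C (f k) * Polynomial.Chebyshev.U ℝ ((k : ℤ) - 1)).natDegree
        ≤ M - 2 := by
    intro f
    refine natDegree_sum_le_of_forall_le _ _ fun k hk => ?_
    refine (natDegree_C_mul_le _ _).trans ?_
    rcases Nat.eq_zero_or_pos k with rfl | hk0
    · rw [show ((0:ℕ) : ℤ) - 1 = -1 by norm_num, Polynomial.Chebyshev.U_neg_one]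
      simp
    · rw [show ((k:ℕ) : ℤ) - 1 = ((k - 1 : ℕ) : ℤ) by omega]
      refine (natDegree_U_le (k-1)).trans ?_
      have := Finset.mem_range.mp hk
      omega
  rcases Nat.lt_or_ge M 2 with hM2 | hM2
  · -- M = 0 or 1 : T-sum has natDegree 0, U-part handled by bounds anyway
    unfold Pker
    refine natDegree_mul_le.trans ?_
    have h2 : (2 : ℝ[X]).natDegree = 0 := natDegree_ofNat 2
    rw [h2, zero_add]
    refine (natDegree_add_le _ _).trans ?_
    rw [max_le_iff]
    constructor
    · refine (natDegree_add_le _ _).trans ?_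
      rw [max_le_iff]
      refine ⟨natDegree_pow_le.trans ?_, natDegree_pow_le.trans ?_⟩
      · have := hTsum (fun k => Real.cos (k * θ0)); omega
      · have := hTsum (fun k => Real.sin (k * θ0)); omega
    · -- here the U-sums are literally 0 since M ≤ 1
      have hz : ∀ f : ℕ → ℝ,
          (∑ k ∈ Finset.range M, C (f k) * Polynomial.Chebyshev.U ℝ ((k : ℤ) - 1)) = 0 := by
        intro f
        interval_cases M
        · simp
        · rw [Finset.sum_range_one]
          rw [show ((0:ℕ) : ℤ) - 1 = -1 by norm_num, Polynomial.Chebyshev.U_neg_one]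
          simp
      rw [hz, hz]
      simp
  · unfold Pker
    refine natDegree_mul_le.trans ?_
    have h2 : (2 : ℝ[X]).natDegree = 0 := natDegree_ofNat 2
    rw [h2, zero_add]
    refine (natDegree_add_le _ _).trans ?_
    rw [max_le_iff]
    constructor
    · refine (natDegree_add_le _ _).trans ?_
      rw [max_le_iff]
      refine ⟨natDegree_pow_le.trans ?_, natDegree_pow_le.trans ?_⟩
      · have := hTsum (fun k => Real.cos (k * θ0)); omega
      · have := hTsum (fun k => Real.sin (k * θ0)); omega
    · refine natDegree_mul_le.trans ?_
      have hX2 : (1 - X ^ 2 : ℝ[X]).natDegree ≤ 2 := by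
        refine (natDegree_sub_le _ _).trans ?_
        simp [natDegree_X_pow]
      have hsq : ∀ f : ℕ → ℝ,
          ((∑ k ∈ Finset.range M, C (f k) * Polynomial.Chebyshev.U ℝ ((k : ℤ) - 1)) ^ 2).natDegree
            ≤ 2 * (M - 2) := by
        intro f
        refine (natDegree_pow_le).trans ?_
        have := hUsum f
        omega
      have hadd := (natDegree_add_le _ _).trans (max_le (hsq fun k => Real.cos (k * θ0))
        (hsq fun k => Real.sin (k * θ0)))
      omega

end FDP

namespace FDP

set_option maxHeartbeats 1000000 in
theorem stmt_6_main : ∀ t ∈ Icc (0:ℝ) 1, ∀ n : ℕ, 0 < n →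
      ∃ Q : Polynomial ℝ, 2 * Q.natDegree ≤ n ∧ Q.eval (1 - t) = 1 ∧
        ∀ s ∈ Icc (-1:ℝ) 1,
          |Q.eval s| ≤ 10000 * ((((n : ℝ))⁻¹ ^ 2 + (n : ℝ)⁻¹ * Real.sqrt t))
            / (((((n : ℝ))⁻¹ ^ 2 + (n : ℝ)⁻¹ * Real.sqrt t)) + |1 - t - s|) := by
  intro t ht n hn
  obtain ⟨ht0, ht1⟩ := ht
  have hnpos : (0:ℝ) < (n:ℝ) := by exact_mod_cast hn
  set θ0 := Real.arccos (1 - t) with hθ0def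
  set M := n / 4 + 1 with hMdef
  have hM1 : 1 ≤ M := by omega
  have hMn : M ≤ n := by omega
  have hn4M : n < 4 * M := by omega
  have hMposR : (0:ℝ) < (M:ℝ) := by exact_mod_cast hM1
  have hMnR : (M:ℝ) ≤ (n:ℝ) := by exact_mod_cast hMn
  have hn4MR : (n:ℝ) ≤ 4 * (M:ℝ) := by exact_mod_cast hn4M.le
  clear_value M
  have hcosθ0 : Real.cos θ0 = 1 - t := Real.cos_arccos (by linarith) (by linarith)
  have hθ0nonneg : 0 ≤ θ0 := Real.arccos_nonneg _
  have hθ0le : θ0 ≤ Real.pi / 2 := Real.arccos_le_pi_div_two.mpr (by linarith)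
  have hπ1 : (3.14 : ℝ) ≤ Real.pi := Real.pi_gt_d2.le
  have hπ2 : Real.pi ≤ 3.15 := Real.pi_lt_d2.le
  -- θ0 ≤ 3 √t
  have hθ0t : θ0 ≤ 3 * Real.sqrt t := by
    have hhalf := Real.mul_le_sin (x := θ0/2) (by linarith) (by linarith)
    have ht2 : t = 2 * Real.sin (θ0/2)^2 := by
      have hc2 := Real.cos_two_mul (θ0/2)
      rw [show 2*(θ0/2) = θ0 by ring] at hc2
      have hsc := Real.sin_sq_add_cos_sq (θ0/2)
      nlinarith [hcosθ0]
    have hsq : (θ0/3)^2 ≤ t := by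
      have hπpos : (0:ℝ) < Real.pi := by linarith
      have h1 : θ0 / Real.pi ≤ Real.sin (θ0/2) := by
        have heq : 2 / Real.pi * (θ0/2) = θ0 / Real.pi := by field_simp
        linarith [hhalf, heq]
      have h2 : (θ0 / Real.pi)^2 ≤ Real.sin (θ0/2)^2 := by
        have h0 : 0 ≤ θ0 / Real.pi := by positivity
        nlinarith
      have hid : (θ0/Real.pi)^2 * Real.pi^2 = θ0^2 := by field_simp
      have h2' := mul_le_mul_of_nonneg_right h2 (sq_nonneg Real.pi)
      have h18 : 0 ≤ 18 - Real.pi^2 := by nlinarith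
      have h19 := mul_nonneg h18 (sq_nonneg (Real.sin (θ0/2)))
      have hid2 : (θ0/3)^2 = θ0^2/9 := by ring
      nlinarith
    have := (Real.le_sqrt (by positivity) (by linarith)).mpr hsq
    linarith
  clear_value θ0
  set P := Pker M θ0 with hPdef
  have hPeval : ∀ θ : ℝ, P.eval (Real.cos θ) = Gker M (θ - θ0) + Gker M (θ + θ0) :=
    fun θ => Pker_eval M θ0 θ
  have hPv : P.eval (1 - t) = Gker M 0 + Gker M (θ0 + θ0) := by
    rw [← hcosθ0, hPeval θ0, sub_self]
  have hPvlb : (M:ℝ)^2 ≤ P.eval (1 - t) := by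
    rw [hPv, Gker_zero]
    have := Gker_nonneg M (θ0 + θ0)
    linarith
  clear_value P
  have hPvpos : 0 < P.eval (1 - t) := lt_of_lt_of_le (by positivity) hPvlb
  refine ⟨Polynomial.C (P.eval (1 - t))⁻¹ * P, ?_, ?_, ?_⟩
  · have h1 := Polynomial.natDegree_C_mul_le ((P.eval (1-t))⁻¹) P
    have hdeg := Pker_natDegree M θ0
    rw [← hPdef] at hdeg
    omega
  · rw [Polynomial.eval_mul, Polynomial.eval_C]
    field_simp
  · intro s hs
    obtain ⟨hs1, hs2⟩ := hs
    set θ := Real.arccos s with hθdef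
    have hcosθ : Real.cos θ = s := Real.cos_arccos hs1 hs2
    have hθnn : 0 ≤ θ := Real.arccos_nonneg _
    have hθpi : θ ≤ Real.pi := Real.arccos_le_pi _
    clear_value θ
    set ρ := ((n : ℝ))⁻¹ ^ 2 + (n : ℝ)⁻¹ * Real.sqrt t with hρdef
    clear_value ρ
    set E := Gker M (θ - θ0) + Gker M (θ + θ0) with hEdef
    clear_value E
    have hE0 : 0 ≤ E := by
      rw [hEdef]; exact add_nonneg (Gker_nonneg _ _) (Gker_nonneg _ _)
    have hst0 : 0 ≤ Real.sqrt t := Real.sqrt_nonneg t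
    have hinv2 : (0:ℝ) < (n:ℝ)⁻¹^2 := by positivity
    have hρpos : 0 < ρ := by
      rw [hρdef]
      have h0' : 0 ≤ (n:ℝ)⁻¹ * Real.sqrt t := by positivity
      linarith
    set d := |1 - t - s| with hddef
    clear_value d
    have hd0 : 0 ≤ d := by rw [hddef]; exact abs_nonneg _
    have hQs : (Polynomial.C (P.eval (1-t))⁻¹ * P).eval s = (P.eval (1-t))⁻¹ * E := by
      rw [Polynomial.eval_mul, Polynomial.eval_C, ← hcosθ, hPeval, ← hEdef]
    have habs : |(Polynomial.C (P.eval (1-t))⁻¹ * P).eval s| = (P.eval (1-t))⁻¹ * E := by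
      rw [hQs, abs_of_nonneg (mul_nonneg (inv_nonneg.mpr hPvpos.le) hE0)]
    rw [habs]
    have hstep1 : (P.eval (1-t))⁻¹ * E ≤ E / (M:ℝ)^2 := by
      rw [div_eq_inv_mul]
      exact mul_le_mul_of_nonneg_right (inv_anti₀ (by positivity) hPvlb) hE0
    refine hstep1.trans ?_
    rw [div_le_div_iff₀ (by positivity) (by positivity)]
    -- ⊢ E * (ρ + d) ≤ 10000 * ρ * M^2
    clear hstep1 habs hQs hPeval hPv hPvlb hPvpos hPdef
    set v := |θ - θ0| with hvdef
    clear_value v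
    have hv0 : 0 ≤ v := by rw [hvdef]; exact abs_nonneg _
    have hvπ : v ≤ Real.pi := by
      rw [hvdef]; exact abs_le.mpr ⟨by linarith, by linarith⟩
    have hsum_ge : v ≤ θ + θ0 := by
      rw [hvdef]; exact abs_le.mpr ⟨by linarith, by linarith⟩
    -- d ≤ v^2/2 + θ0 * v
    have hdb : d ≤ v^2/2 + θ0 * v := by
      have heq : (1 - t) - s = Real.cos θ0 - Real.cos θ := by rw [hcosθ0, hcosθ]
      have hcc : d = |(-2) * Real.sin ((θ0 + θ)/2) * Real.sin ((θ0 - θ)/2)| := by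
        rw [hddef, heq, Real.cos_sub_cos]
      have b1 : |Real.sin ((θ0 + θ)/2)| ≤ (θ0 + θ)/2 := by
        refine Real.abs_sin_le_abs.trans ?_
        rw [abs_of_nonneg (by linarith)]
      have b2 : |Real.sin ((θ0 - θ)/2)| ≤ v/2 := by
        refine Real.abs_sin_le_abs.trans ?_
        rw [abs_div, abs_sub_comm, abs_of_nonneg (by norm_num : (0:ℝ) ≤ 2), ← hvdef]
      have hdd : d ≤ 2 * ((θ0 + θ)/2) * (v/2) := by
        rw [hcc, abs_mul, abs_mul]
        have h2' : |(-2 : ℝ)| = 2 := by norm_num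
        rw [h2']
        have hs2' := abs_nonneg (Real.sin ((θ0 - θ)/2))
        have hp := mul_le_mul b1 b2 hs2' (by linarith : (0:ℝ) ≤ (θ0 + θ)/2)
        linarith
      have hθle : θ ≤ θ0 + v := by
        have h' : θ - θ0 ≤ v := by rw [hvdef]; exact le_abs_self _
        linarith
      have hm : θ * v ≤ (θ0 + v) * v := mul_le_mul_of_nonneg_right hθle hv0
      have hexp1 : 2 * ((θ0 + θ)/2) * (v/2) = (θ0 * v + θ * v)/2 := by ring
      have hexp2 : (θ0 + v) * v = θ0 * v + v^2 := by ring
      linarith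
    rcases le_or_gt ((M:ℝ) * v) 7 with hc | hc
    · -- small case
      have hE2 : E ≤ 2 * (M:ℝ)^2 := by
        have h1 := Gker_le_sq M (θ - θ0)
        have h2 := Gker_le_sq M (θ + θ0)
        rw [hEdef]; linarith
      have hnv : (n:ℝ) * v ≤ 28 := by
        have h1' := mul_le_mul_of_nonneg_right hn4MR hv0
        have h2' : 4*(M:ℝ)*v = 4*((M:ℝ)*v) := by ring
        linarith
      have e1 : v ≤ 28 / (n:ℝ) := by rw [le_div_iff₀ hnpos]; linarith
      have h784 : (28 / (n:ℝ))^2 = 784 * ((n:ℝ)⁻¹^2) := by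
        rw [div_pow]; field_simp; norm_num
      have e2 : v^2 ≤ 784 * ((n:ℝ)⁻¹^2) := by
        have h1' := mul_le_mul e1 e1 hv0 (by positivity : (0:ℝ) ≤ 28/(n:ℝ))
        have h2' : v^2 = v*v := by ring
        have h3' : (28/(n:ℝ))*(28/(n:ℝ)) = (28/(n:ℝ))^2 := by ring
        linarith
      have h84 : 3 * Real.sqrt t * (28 / (n:ℝ)) = 84 * ((n:ℝ)⁻¹ * Real.sqrt t) := by
        field_simp; ring
      have e3 : θ0 * v ≤ 84 * ((n:ℝ)⁻¹ * Real.sqrt t) := by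
        have h1' := mul_le_mul hθ0t e1 hv0 (by positivity : (0:ℝ) ≤ 3 * Real.sqrt t)
        linarith
      have hd2 : d ≤ 476 * ρ := by
        rw [hρdef]
        have hst' : 0 ≤ (n:ℝ)⁻¹ * Real.sqrt t := by positivity
        linarith
      have hA : E * (ρ+d) ≤ 2*(M:ℝ)^2 * (ρ+d) :=
        mul_le_mul_of_nonneg_right hE2 (by linarith)
      have hB : (ρ+d) ≤ 477 * ρ := by linarith
      have hC : 2*(M:ℝ)^2*(ρ+d) ≤ 2*(M:ℝ)^2*(477*ρ) :=
        mul_le_mul_of_nonneg_left hB (by positivity)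
      have he : 2*(M:ℝ)^2*(477*ρ) = 954*(ρ*(M:ℝ)^2) := by ring
      have hgoal : 10000 * ρ * (M:ℝ)^2 = 10000*(ρ*(M:ℝ)^2) := by ring
      have hx : 0 ≤ ρ*(M:ℝ)^2 := mul_nonneg hρpos.le (sq_nonneg _)
      linarith
    · -- large case
      have hvpos : 0 < v := by
        rcases hv0.lt_or_eq with h | h
        · exact h
        · exfalso; rw [← h, mul_zero] at hc; norm_num at hc
      have hcases : θ - θ0 = v ∨ θ - θ0 = -v := by
        rcases abs_cases (θ - θ0) with ⟨h, _⟩ | ⟨h, _⟩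
        · left; rw [hvdef]; exact h.symm
        · right; rw [hvdef]; linarith
      have hG1 : Gker M (θ - θ0) ≤ 49 / v^2 := by
        have hb : Gker M v ≤ 49 / v^2 := Gker_le_inv M hvpos (by linarith)
        rcases hcases with h | h
        · rw [h]; exact hb
        · rw [h, Gker_neg]; exact hb
      have hG2 : Gker M (θ + θ0) ≤ 49 / v^2 := by
        have hpos2 : 0 < θ + θ0 := lt_of_lt_of_le hvpos hsum_ge
        have hb := Gker_le_inv M hpos2 (by linarith : θ + θ0 ≤ 3*Real.pi/2)
        refine hb.trans ?_
        rw [div_le_div_iff₀ (by positivity) (by positivity)]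
        have hsq2 := mul_le_mul hsum_ge hsum_ge hv0 (le_trans hv0 hsum_ge)
        have h1' : v^2 = v*v := by ring
        have h2' : (θ+θ0)*(θ+θ0) = (θ+θ0)^2 := by ring
        linarith
      have hE98 : E ≤ 98 / v^2 := by
        rw [hEdef]
        have hr : 49/v^2 + 49/v^2 = 98/v^2 := by ring
        linarith
      have hw7 : 7 < (n:ℝ) * v :=
        lt_of_lt_of_le hc (mul_le_mul_of_nonneg_right hMnR hv0)
      have hYnn : (0:ℝ) ≤ (n:ℝ)*v := mul_nonneg hnpos.le hv0
      have hMvnn : (0:ℝ) ≤ (M:ℝ)*v := mul_nonneg hMposR.le hv0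
      have hρa : (n:ℝ)⁻¹^2 ≤ ρ := by
        rw [hρdef]
        have : 0 ≤ (n:ℝ)⁻¹ * Real.sqrt t := by positivity
        linarith
      have hρb : (n:ℝ)⁻¹ * Real.sqrt t ≤ ρ := by rw [hρdef]; linarith
      have hkey : (98 / v^2) * (ρ + d) ≤ 10000 * ρ * (M:ℝ)^2 := by
        rw [div_mul_eq_mul_div, div_le_iff₀ (by positivity)]
        -- ⊢ 98 * (ρ + d) ≤ 10000 * ρ * M^2 * v^2
        have hvid : v^2 = (n:ℝ)⁻¹^2 * ((n:ℝ)*v)^2 := by field_simp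
        have f1 : v^2 ≤ ρ * ((n:ℝ)*v)^2 := by
          have := mul_le_mul_of_nonneg_right hρa (sq_nonneg ((n:ℝ)*v))
          linarith
        have c1 : θ0 * v ≤ 3 * Real.sqrt t * v := mul_le_mul_of_nonneg_right hθ0t hv0
        have c2 : 3 * Real.sqrt t * v = 3 * (((n:ℝ)⁻¹ * Real.sqrt t) * ((n:ℝ)*v)) := by
          field_simp
        have c3 : ((n:ℝ)⁻¹ * Real.sqrt t) * ((n:ℝ)*v) ≤ ρ * ((n:ℝ)*v) :=
          mul_le_mul_of_nonneg_right hρb hYnn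
        have c4 : ρ * ((n:ℝ)*v) ≤ ρ * (((n:ℝ)*v)^2 / 7) := by
          refine mul_le_mul_of_nonneg_left ?_ hρpos.le
          have h77 := mul_le_mul_of_nonneg_left hw7.le hYnn
          have : ((n:ℝ)*v)^2 = ((n:ℝ)*v) * ((n:ℝ)*v) := by ring
          linarith
        have f2 : θ0 * v ≤ (3/7) * (ρ * ((n:ℝ)*v)^2) := by linarith
        have f3 : 98 * ρ ≤ 2 * (ρ * ((n:ℝ)*v)^2) := by
          have h49 : (49:ℝ) ≤ ((n:ℝ)*v)^2 := by
            have := mul_le_mul hw7.le hw7.le (by norm_num) hYnn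
            have hsq' : ((n:ℝ)*v)^2 = ((n:ℝ)*v)*((n:ℝ)*v) := by ring
            linarith
          have := mul_le_mul_of_nonneg_left h49 hρpos.le
          linarith
        have f4 : ρ * ((n:ℝ)*v)^2 ≤ 16 * (ρ * ((M:ℝ)*v)^2) := by
          have hYle : (n:ℝ)*v ≤ 4*((M:ℝ)*v) := by
            have := mul_le_mul_of_nonneg_right hn4MR hv0
            linarith [show (4*(M:ℝ))*v = 4*((M:ℝ)*v) from by ring]
          have hsq' := mul_le_mul hYle hYle hYnn (by linarith)
          have h16 : (4*((M:ℝ)*v)) * (4*((M:ℝ)*v)) = 16 * ((M:ℝ)*v)^2 := by ring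
          have hYsq : ((n:ℝ)*v)^2 = ((n:ℝ)*v)*((n:ℝ)*v) := by ring
          have := mul_le_mul_of_nonneg_left (show ((n:ℝ)*v)^2 ≤ 16*((M:ℝ)*v)^2 from by linarith)
            hρpos.le
          linarith
        have g1 : 98 * d ≤ 49 * (ρ * ((n:ℝ)*v)^2) + 42 * (ρ * ((n:ℝ)*v)^2) := by linarith
        have he : ρ*((M:ℝ)*v)^2 = ρ*(M:ℝ)^2*v^2 := by ring
        have hgoal : 10000 * ρ * (M:ℝ)^2 * v^2 = 10000*(ρ*(M:ℝ)^2*v^2) := by ring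
        have hx : 0 ≤ ρ*(M:ℝ)^2*v^2 := by positivity
        linarith
      calc E * (ρ + d) ≤ (98 / v^2) * (ρ + d) :=
            mul_le_mul_of_nonneg_right hE98 (by linarith)
        _ ≤ 10000 * ρ * (M:ℝ)^2 := hkey

end FDP


/-- **Lemma (univariate fast decreasing polynomial).** There is an absolute constant `c > 0`
such that for every `t ∈ [0,1]` and every positive integer `n` there is a univariate real
polynomial `Q` of degree at most `n/2` with `Q(1-t) = 1` and
`|Q(s)| ≤ c ρ_n^*(t) / (ρ_n^*(t) + |1-t-s|)` for all `s ∈ [-1,1]`. -/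
theorem stmt_6 :
    ∃ c : ℝ, 0 < c ∧ ∀ t ∈ Icc (0:ℝ) 1, ∀ n : ℕ, 0 < n →
      ∃ Q : Polynomial ℝ, 2 * Q.natDegree ≤ n ∧ Q.eval (1 - t) = 1 ∧
        ∀ s ∈ Icc (-1:ℝ) 1,
          |Q.eval s| ≤ c * rhoStar n t / (rhoStar n t + |1 - t - s|) := by
  refine ⟨10000, by norm_num, ?_⟩
  intro t ht n hn
  obtain ⟨Q, h1, h2, h3⟩ := FDP.stmt_6_main t ht n hn
  exact ⟨Q, h1, h2, fun s hs => by simpa [rhoStar] using h3 s hs⟩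

end FDPSection
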